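/- Let s = 2 and define a₁,…,a_r by a₁ = (a_r, id)σ, a₂ = (id, a₁)σ, a_i = (a_{i−1}, id) for 3 ≤ i ≤ r, and let G be their closed generated subgroup. For each j, let N_j be the closed normal subgroup of G generated by the G-conjugates of all a_ℓ with ℓ ≢ j, j−1 (mod r). Then for any i the natural homomorphism G → G/N_i × G/N_{i+1} × ⋯ × G/N_{i+r−2} is surjective (indices mod r). -/

import Mathlib

namespace BinTree

/-- Vertices of the infinite rooted binary tree: finite words over `{0,1}`. -/
abbrev Vertex : Type := List Bool

/-- A function on vertices is a tree automorphism function if it preserves lengths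
(levels) and prefixes. -/
def IsTreeAutFun (f : Vertex → Vertex) : Prop :=
  (∀ v, (f v).length = v.length) ∧ ∀ v w : Vertex, (f (v ++ w)).take v.length = f v

/-- `Ω`: the automorphism group of the infinite rooted binary tree, realized as the
subgroup of permutations of the set of vertices preserving the tree structure. -/
def TreeAut : Subgroup (Equiv.Perm Vertex) where
  carrier := {e | IsTreeAutFun ⇑e}
  one_mem' := ⟨fun _ => rfl, fun v w => by
    simpa using List.take_left (l₁ := v) (l₂ := w)⟩
  mul_mem' := by
    rintro a b ha hb
    obtain ⟨ha1, ha2⟩ := ha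
    obtain ⟨hb1, hb2⟩ := hb
    refine ⟨fun v => ?_, fun v w => ?_⟩
    · simp [Equiv.Perm.mul_apply, ha1, hb1]
    · have hb' : b (v ++ w) = b v ++ (b (v ++ w)).drop v.length := by
        conv_lhs => rw [← List.take_append_drop v.length (b (v ++ w)), hb2]
      have hlen : (b v).length = v.length := hb1 v
      calc ((a * b) (v ++ w)).take v.length
          = (a (b v ++ (b (v ++ w)).drop v.length)).take v.length := by
            rw [Equiv.Perm.mul_apply, ← hb']
        _ = a (b v) := by rw [← hlen]; exact ha2 _ _
        _ = (a * b) v := rfl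
  inv_mem' := by
    intro a ha
    obtain ⟨ha1, ha2⟩ := ha
    show IsTreeAutFun ⇑a⁻¹
    have hlen : ∀ v : Vertex, (a⁻¹ v).length = v.length := by
      intro v
      have h := ha1 (a⁻¹ v)
      rw [show ∀ x, a (a⁻¹ x) = x from Equiv.apply_symm_apply a] at h
      exact h.symm ▸ rfl
    refine ⟨hlen, fun v w => ?_⟩
    have htl : ((a⁻¹ (v ++ w)).take v.length).length = v.length := by
      rw [List.length_take, hlen, List.length_append]
      omega
    have key : a ((a⁻¹ (v ++ w)).take v.length) = v := by
      have h2 := ha2 ((a⁻¹ (v ++ w)).take v.length) ((a⁻¹ (v ++ w)).drop v.length)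
      rw [List.take_append_drop, htl, show ∀ x, a (a⁻¹ x) = x from Equiv.apply_symm_apply a] at h2
      rw [← h2]
      simpa using List.take_left (l₁ := v) (l₂ := w)
    have h3 := congrArg (⇑a⁻¹) key
    rwa [show ∀ x, a⁻¹ (a x) = x from Equiv.symm_apply_apply a] at h3

/-- wreath recursion, forward map: `(g,h)σᵗ` -/
def wrFun (g h : Vertex → Vertex) (t : Bool) : Vertex → Vertex
  | [] => []
  | x :: v => (xor x t) :: (cond x (h v) (g v))

/-- wreath recursion, inverse map -/
def wrFunInv (g h : Vertex → Vertex) (t : Bool) : Vertex → Vertex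
  | [] => []
  | y :: w => (xor y t) :: (cond (xor y t) (h w) (g w))

/-- `(g,h)σᵗ` as a permutation of the vertices. -/
def wrPerm (g h : Equiv.Perm Vertex) (t : Bool) : Equiv.Perm Vertex where
  toFun := wrFun ⇑g ⇑h t
  invFun := wrFunInv ⇑g.symm ⇑h.symm t
  left_inv := by
    intro v
    cases v with
    | nil => rfl
    | cons x v => cases x <;> cases t <;> simp [wrFun, wrFunInv]
  right_inv := by
    intro v
    cases v with
    | nil => rfl
    | cons x v => cases x <;> cases t <;> simp [wrFun, wrFunInv]

/-- The element `(g,h)σᵗ` of `Ω`: acts on the first level by `σᵗ` (where `σ` is the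
swap of the two level-one subtrees), with section `g` at the vertex `0` and section
`h` at the vertex `1`.  Thus `(γ₀,γ₁)τ` of the wreath recursion
`Ω ≃ (Ω × Ω) ⋊ S₂` is `wr γ₀ γ₁ t` (`t = true` iff `τ = σ`). -/
def wr (g h : TreeAut) (t : Bool) : TreeAut :=
  ⟨wrPerm g.1 h.1 t, by
    have hg : IsTreeAutFun ⇑g.1 := g.2
    have hh : IsTreeAutFun ⇑h.1 := h.2
    constructor
    · intro v
      cases v with
      | nil => rfl
      | cons x v =>
        cases x <;> simp [wrPerm, wrFun, hg.1, hh.1]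
    · intro v w
      cases v with
      | nil => simp [wrPerm, wrFun]
      | cons x v =>
        cases x <;> simp [wrPerm, wrFun, hg.2, hh.2]⟩

/-- Application of a tree automorphism to a vertex. -/
def ap (γ : TreeAut) (v : Vertex) : Vertex := γ.1 v

/-- The permutation induced by `γ ∈ Ω` on level `n` of the tree. -/
def levelPerm (n : ℕ) (γ : TreeAut) : Equiv.Perm (List.Vector Bool n) where
  toFun v := ⟨γ.1 v.1, by
    have h : IsTreeAutFun ⇑γ.1 := γ.2
    rw [h.1 v.1]; exact v.2⟩
  invFun v := ⟨γ.1.symm v.1, by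
    have h : IsTreeAutFun ⇑γ.1 := γ.2
    have h2 := h.1 (γ.1.symm v.1)
    rw [Equiv.apply_symm_apply] at h2
    exact h2.symm.trans v.2⟩
  left_inv v := Subtype.ext (Equiv.symm_apply_apply _ _)
  right_inv v := Subtype.ext (Equiv.apply_symm_apply _ _)

/-- Restriction to level `n` as a group homomorphism. -/
def levelHom (n : ℕ) : TreeAut →* Equiv.Perm (List.Vector Bool n) where
  toFun := levelPerm n
  map_one' := Equiv.ext fun v => Subtype.ext rfl
  map_mul' := fun g h => Equiv.ext fun v => Subtype.ext rfl

/-- `sgn_n`: the sign of the permutation induced on level `n`. -/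
def sgn (n : ℕ) (γ : TreeAut) : ℤˣ := Equiv.Perm.sign (levelPerm n γ)

/-- An odometer: acts as a single `2^n`-cycle on each level `n ≥ 1`. -/
def IsOdometer (γ : TreeAut) : Prop :=
  ∀ n : ℕ, 1 ≤ n → (levelPerm n γ).IsCycle ∧ (levelPerm n γ).support = Finset.univ

/-- The profinite topology on `Ω`: the coarsest topology making all level
restrictions (to the discrete finite groups) continuous. -/
instance : TopologicalSpace TreeAut :=
  ⨅ n : ℕ, TopologicalSpace.induced (levelPerm n) ⊥

/-- A vertex `w` is in a stable cycle of `γ` of length `k`: its `γ`-orbit has exactly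
`k` elements, and for every level `m` above the level of `w`, all level-`m` vertices
lying above this orbit are in one single `γ`-cycle (necessarily of length
`2^(m - n) * k`, which we record via the periodicity condition). -/
def InStableCycle (γ : TreeAut) (w : Vertex) (k : ℕ) : Prop :=
  0 < k ∧ ap (γ ^ k) w = w ∧ (∀ j : ℕ, 0 < j → j < k → ap (γ ^ j) w ≠ w) ∧
  (∀ u : Vertex, w.length < u.length → (∃ i : ℕ, u.take w.length = ap (γ ^ i) w) →
    (ap (γ ^ (2 ^ (u.length - w.length) * k)) u = u ∧
      ∀ u' : Vertex, u'.length = u.length →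
        (∃ i : ℕ, u'.take w.length = ap (γ ^ i) w) → ∃ j : ℕ, ap (γ ^ j) u = u'))

/-- Self-similar subgroup: closed under taking sections (here the section of `γ` at
the first-level vertex `x` is characterized by `(xv)γ = (x)γ ⬝ (v)γₓ`). -/
def SelfSimilar (H : Subgroup TreeAut) : Prop :=
  ∀ γ ∈ H, ∀ x : Bool, ∀ δ : TreeAut,
    (∀ v : Vertex, ap γ (x :: v) = ap γ [x] ++ ap δ v) → δ ∈ H


-- chunk 1: wr algebra
section
open BinTree

@[simp] lemma treeAut_mul_coe (g h : TreeAut) : (↑(g * h) : Equiv.Perm Vertex) = g.1 * h.1 := rfl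

lemma wr_apply (g h : TreeAut) (t : Bool) (v : Vertex) :
    ((wr g h t : TreeAut) : Equiv.Perm Vertex) v = wrFun ⇑g.1 ⇑h.1 t v := rfl

lemma treeAut_ext {g h : TreeAut} (H : ∀ v : Vertex, g.1 v = h.1 v) : g = h :=
  Subtype.ext (Equiv.ext H)

lemma wr_mul_false (g h g' h' : TreeAut) (t : Bool) :
    wr g h t * wr g' h' false = wr (g * g') (h * h') t := by
  apply treeAut_ext
  intro v
  cases v with
  | nil => rfl
  | cons x v => cases x <;> rfl

lemma wr_mul_true (g h g' h' : TreeAut) (t : Bool) :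
    wr g h t * wr g' h' true = wr (h * g') (g * h') (!t) := by
  apply treeAut_ext
  intro v
  cases v with
  | nil => rfl
  | cons x v => cases x <;> cases t <;> rfl

lemma wr_one : wr 1 1 false = (1 : TreeAut) := by
  apply treeAut_ext
  intro v
  cases v with
  | nil => rfl
  | cons x v => cases x <;> rfl

end
-- chunk 2: levelPerm lemmas
section
open BinTree

lemma levelPerm_one (n : ℕ) : levelPerm n (1 : TreeAut) = 1 := (levelHom n).map_one

lemma apply_eq_of_levelPerm_eq_one {n : ℕ} {γ : TreeAut} (h : levelPerm n γ = 1)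
    {w : Vertex} (hw : w.length = n) : γ.1 w = w := by
  have := congrArg (fun e => (e ⟨w, hw⟩ : List.Vector Bool n).1) h
  exact this

lemma levelPerm_eq_one_of_apply {n : ℕ} {γ : TreeAut}
    (h : ∀ w : Vertex, w.length = n → γ.1 w = w) : levelPerm n γ = 1 := by
  exact Equiv.ext fun v => Subtype.ext (h v.1 v.2)

lemma eq_one_of_levels {γ : TreeAut} (h : ∀ n, levelPerm n γ = 1) : γ = 1 :=
  treeAut_ext fun v => apply_eq_of_levelPerm_eq_one (h v.length) rfl

lemma levelPerm_wr_false {n : ℕ} {g h : TreeAut} (hg : levelPerm n g = 1)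
    (hh : levelPerm n h = 1) : levelPerm (n + 1) (wr g h false) = 1 := by
  apply levelPerm_eq_one_of_apply
  intro w hw
  match w, hw with
  | x :: w, hw =>
    have hwn : w.length = n := by simpa using hw
    have hg' := apply_eq_of_levelPerm_eq_one hg hwn
    have hh' := apply_eq_of_levelPerm_eq_one hh hwn
    cases x <;> simp [wr, wrPerm, wrFun, hg', hh']

lemma levelPerm_zero_eq_one (γ : TreeAut) : levelPerm 0 γ = 1 := by
  apply levelPerm_eq_one_of_apply
  intro w hw
  have : w = [] := List.eq_nil_of_length_eq_zero hw
  subst this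
  have h : IsTreeAutFun ⇑γ.1 := γ.2
  have := h.1 []
  exact List.eq_nil_of_length_eq_zero this

end
-- chunk 3: the cyclic relation
section
open BinTree

variable {r : ℕ}

/-- descending product `a j * a (j-1) * ⋯ * a (j-m+1)` -/
def desc (a : ZMod r → TreeAut) (j : ZMod r) : ℕ → TreeAut
  | 0 => 1
  | m + 1 => desc a j m * a (j - (m : ZMod r))

@[simp] lemma desc_zero (a : ZMod r → TreeAut) (j : ZMod r) : desc a j 0 = 1 := rfl

lemma desc_succ (a : ZMod r → TreeAut) (j : ZMod r) (m : ℕ) :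
    desc a j (m + 1) = desc a j m * a (j - (m : ZMod r)) := rfl

lemma desc_succ_left (a : ZMod r → TreeAut) (j : ZMod r) (m : ℕ) :
    desc a j (m + 1) = a j * desc a (j - 1) m := by
  induction m with
  | zero => simp [desc_succ]
  | succ m ih =>
    rw [desc_succ, ih, mul_assoc, desc_succ a (j-1) m]
    congr 2
    push_cast
    ring

variable {a : ZMod r → TreeAut} (hr : 3 ≤ r)
  (ha1 : a 1 = wr (a (r : ZMod r)) 1 true)
  (ha2 : a 2 = wr 1 (a 1) true)
  (hhi : ∀ i : ℕ, 3 ≤ i → i ≤ r → a (i : ZMod r) = wr (a ((i - 1 : ℕ) : ZMod r)) 1 false)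

include hhi in
lemma desc_top_wr (m : ℕ) (hm : m ≤ r - 2) :
    desc a (r : ZMod r) m = wr (desc a ((r : ZMod r) - 1) m) 1 false := by
  induction m with
  | zero => simp [wr_one]
  | succ m ih =>
    have hm' : m ≤ r - 2 := le_trans (Nat.le_succ m) hm
    have h3 : 3 ≤ r - m := by omega
    have hmr : r - m ≤ r := Nat.sub_le _ _
    have hcast : ((r - m : ℕ) : ZMod r) = (r : ZMod r) - (m : ZMod r) := by
      rw [Nat.cast_sub (by omega : m ≤ r)]
    have hcast2 : ((r - m - 1 : ℕ) : ZMod r) = (r : ZMod r) - 1 - (m : ZMod r) := by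
      rw [show r - m - 1 = r - (m + 1) by omega, Nat.cast_sub (by omega : m + 1 ≤ r)]
      push_cast
      ring
    have hlet : a ((r : ZMod r) - (m : ZMod r)) = wr (a ((r : ZMod r) - 1 - (m : ZMod r))) 1 false := by
      have := hhi (r - m) h3 hmr
      rw [hcast, hcast2] at this
      exact this
    rw [desc_succ, ih hm', hlet, wr_mul_false, mul_one, ← desc_succ]

include ha1 ha2 hhi in
lemma desc_diag_wr (k : ℕ) (h2 : 2 ≤ k) (hk : k ≤ r) :
    desc a (k : ZMod r) k = wr (desc a ((k - 1 : ℕ) : ZMod r) (k - 1) * a (r : ZMod r)) 1 false := by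
  induction k, h2 using Nat.le_induction with
  | base =>
    have hbase : desc a (((2:ℕ)) : ZMod r) 2 = a 2 * (a 1 * 1) := by
      rw [show ((2:ℕ) : ZMod r) = 2 by norm_cast, desc_succ_left, desc_succ_left]
      norm_num
    have h1 : desc a (((2:ℕ) - 1 : ℕ) : ZMod r) ((2:ℕ) - 1) = a 1 := by
      norm_num [desc_succ]
    rw [hbase, mul_one, h1, ha2, ha1, wr_mul_true]
    simp
  | succ k hk2 ih =>
    have hkr : k ≤ r := by omega
    have h1 : desc a ((k+1 : ℕ) : ZMod r) (k+1) = a ((k+1 : ℕ) : ZMod r) * desc a ((k : ℕ) : ZMod r) k := by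
      rw [desc_succ_left]
      congr 2
      push_cast; ring
    have h2' : a ((k+1 : ℕ) : ZMod r) = wr (a ((k : ℕ) : ZMod r)) 1 false := by
      have := hhi (k+1) (by omega) (by omega)
      simpa using this
    have h3 : a ((k : ℕ) : ZMod r) * (desc a ((k - 1 : ℕ) : ZMod r) (k - 1)) = desc a ((k : ℕ) : ZMod r) k := by
      have hs := desc_succ_left a ((k : ℕ) : ZMod r) (k - 1)
      rw [show k - 1 + 1 = k by omega] at hs
      rw [hs]
      congr 2
      rw [show ((k - 1 : ℕ) : ZMod r) = ((k : ℕ) : ZMod r) - 1 by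
        rw [Nat.cast_sub (by omega : 1 ≤ k)]; push_cast; ring]
    rw [h1, h2', ih hkr, wr_mul_false, mul_one, ← mul_assoc, h3]
    simp

/-- the cyclic word `a_k a_{k-1} ⋯ a_1 a_r ⋯ a_{k+1}` -/
def relWord (a : ZMod r → TreeAut) (k : ℕ) : TreeAut :=
  desc a (k : ZMod r) k * desc a (r : ZMod r) (r - k)

include ha1 ha2 hhi in
lemma relWord_step (k : ℕ) (h2 : 2 ≤ k) (hk : k ≤ r) :
    relWord a k = wr (relWord a (k - 1)) 1 false := by
  have hrk : r - k ≤ r - 2 := by omega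
  rw [relWord, desc_diag_wr ha1 ha2 hhi k h2 hk, desc_top_wr hhi (r - k) hrk,
    wr_mul_false, mul_one, mul_assoc]
  have h5 : a (r : ZMod r) * desc a ((r : ZMod r) - 1) (r - k) = desc a (r : ZMod r) (r - k + 1) := by
    rw [desc_succ_left]
  rw [h5, show r - k + 1 = r - (k - 1) by omega, relWord]

include hr ha1 ha2 hhi in
lemma relWord_one_step :
    relWord a 1 = wr 1 (relWord a r) false := by
  have hd1 : desc a ((1 : ℕ) : ZMod r) 1 = a 1 := by simp [desc_succ]
  have e1 : relWord a 1 = a 1 * desc a (r : ZMod r) (r - 1) := by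
    rw [relWord, hd1]
  have e2 : desc a (r : ZMod r) (r - 1) = desc a (r : ZMod r) (r - 2) * a 2 := by
    have h := desc_succ a ((r:ℕ) : ZMod r) (r - 2)
    rw [show r - 2 + 1 = r - 1 by omega] at h
    have hc : ((r:ℕ):ZMod r) - ((r - 2 : ℕ) : ZMod r) = 2 := by
      rw [Nat.cast_sub (by omega : (2:ℕ) ≤ r)]; push_cast; ring
    rw [h, hc]
  have e3 : desc a (r : ZMod r) (r - 2) = wr (desc a ((r : ZMod r) - 1) (r - 2)) 1 false :=
    desc_top_wr hhi _ le_rfl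
  have e4 : a (r : ZMod r) * desc a ((r : ZMod r) - 1) (r - 2) = desc a (r : ZMod r) (r - 1) := by
    have h := desc_succ_left a ((r:ℕ) : ZMod r) (r - 2)
    rw [show r - 2 + 1 = r - 1 by omega] at h
    exact h.symm
  have e5 : desc a (r : ZMod r) (r - 1) * a 1 = desc a (r : ZMod r) r := by
    have h := desc_succ a ((r:ℕ) : ZMod r) (r - 1)
    rw [show r - 1 + 1 = r by omega] at h
    have hc : ((r:ℕ):ZMod r) - ((r - 1 : ℕ) : ZMod r) = 1 := by
      rw [Nat.cast_sub (by omega : (1:ℕ) ≤ r)]; push_cast; ring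
    rw [h, hc]
  have e6 : relWord a r = desc a (r : ZMod r) r := by
    rw [relWord]; simp
  rw [e1, ha1, e2, e3, ha2, wr_mul_true]
  simp only [Bool.not_false, one_mul]
  rw [wr_mul_true]
  simp only [Bool.not_true, one_mul, mul_one, ← mul_assoc, e4, e5, e6]

include hr ha1 ha2 hhi in
lemma relWord_eq_one (k : ℕ) (h1 : 1 ≤ k) (hk : k ≤ r) : relWord a k = 1 := by
  have key : ∀ n : ℕ, ∀ k : ℕ, 1 ≤ k → k ≤ r → levelPerm n (relWord a k) = 1 := by
    intro n
    induction n with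
    | zero => intro k _ _; exact levelPerm_zero_eq_one _
    | succ n ih =>
      intro k h1 hk
      rcases Nat.lt_or_ge k 2 with h | h
      · have hk1 : k = 1 := by omega
        subst hk1
        rw [relWord_one_step hr ha1 ha2 hhi]
        exact levelPerm_wr_false (levelPerm_one n) (ih r (by omega) le_rfl)
      · rw [relWord_step ha1 ha2 hhi k h hk]
        exact levelPerm_wr_false (ih (k-1) (by omega) (by omega)) (levelPerm_one n)
  exact eq_one_of_levels fun n => key n k h1 hk

end
-- chunk 4: topology: topological group + compactness
section
open BinTree

instance : IsTopologicalGroup TreeAut := by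
  show @IsTopologicalGroup TreeAut (⨅ n : ℕ, TopologicalSpace.induced (levelPerm n) ⊥) _
  refine topologicalGroup_iInf fun n => ?_
  letI : TopologicalSpace (Equiv.Perm (List.Vector Bool n)) := ⊥
  haveI : DiscreteTopology (Equiv.Perm (List.Vector Bool n)) := ⟨rfl⟩
  haveI : IsTopologicalGroup (Equiv.Perm (List.Vector Bool n)) :=
    { toContinuousMul := inferInstance, toContinuousInv := inferInstance }
  exact topologicalGroup_induced (levelHom n)

/-- the product embedding -/
def lpemb : TreeAut → ∀ n, Equiv.Perm (List.Vector Bool n) := fun γ n => levelPerm n γ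

lemma take_mem_vector {n m : ℕ} (v : List.Vector Bool m) (h : n ≤ m := by omega) :
    (v.1.take n).length = n := by
  rw [List.length_take, v.2]
  omega

/-- compatibility set -/
def lpcompat : Set (∀ n, Equiv.Perm (List.Vector Bool n)) :=
  ⋂ n : ℕ, {p | ∀ v : List.Vector Bool (n + 1),
    ((p (n+1)) v).1.take n = ((p n) ⟨v.1.take n, take_mem_vector v⟩).1}

lemma range_lpemb : Set.range lpemb = lpcompat := by
  apply Set.Subset.antisymm
  · rintro _ ⟨γ, rfl⟩
    refine Set.mem_iInter.2 fun n => fun v => ?_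
    have hγ : IsTreeAutFun ⇑γ.1 := γ.2
    have hsplit : v.1 = v.1.take n ++ v.1.drop n := (List.take_append_drop n v.1).symm
    have hlen : (v.1.take n).length = n := take_mem_vector v
    show (γ.1 v.1).take n = γ.1 (v.1.take n)
    calc (γ.1 v.1).take n = (γ.1 (v.1.take n ++ v.1.drop n)).take (v.1.take n).length := by
          rw [← hsplit, hlen]
      _ = γ.1 (v.1.take n) := hγ.2 _ _
  · intro p hp
    have compat : ∀ (n : ℕ) (v : List.Vector Bool (n + 1)),
        ((p (n+1)) v).1.take n = ((p n) ⟨v.1.take n, take_mem_vector v⟩).1 :=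
      fun n => Set.mem_iInter.1 hp n
    -- the forward and inverse functions
    set F : Vertex → Vertex := fun w => ((p w.length) ⟨w, rfl⟩).1 with hFdef
    set Finv : Vertex → Vertex := fun w => ((p w.length)⁻¹ ⟨w, rfl⟩).1 with hFinvdef
    have hF : ∀ (n : ℕ) (w : Vertex) (h : w.length = n), F w = ((p n) ⟨w, h⟩).1 := by
      intro n w h; subst h; rfl
    have hFinv : ∀ (n : ℕ) (w : Vertex) (h : w.length = n),
        Finv w = ((p n)⁻¹ ⟨w, h⟩).1 := by
      intro n w h; subst h; rfl
    have lenF : ∀ w : Vertex, (F w).length = w.length := fun w => ((p w.length) ⟨w, rfl⟩).2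
    have lenFinv : ∀ w : Vertex, (Finv w).length = w.length :=
      fun w => ((p w.length)⁻¹ ⟨w, rfl⟩).2
    have lir : ∀ w, F (Finv w) = w := by
      intro w
      rw [hF w.length (Finv w) (lenFinv w)]
      have : (⟨Finv w, lenFinv w⟩ : List.Vector Bool w.length) = (p w.length)⁻¹ ⟨w, rfl⟩ :=
        Subtype.ext (hFinv w.length w rfl)
      rw [this]; exact congrArg Subtype.val ((p w.length).apply_symm_apply _)
    have lri : ∀ w, Finv (F w) = w := by
      intro w
      rw [hFinv w.length (F w) (lenF w)]
      have : (⟨F w, lenF w⟩ : List.Vector Bool w.length) = (p w.length) ⟨w, rfl⟩ :=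
        Subtype.ext (hF w.length w rfl)
      rw [this]; exact congrArg Subtype.val ((p w.length).symm_apply_apply _)
    set e : Equiv.Perm Vertex := ⟨F, Finv, lri, lir⟩ with hedef
    -- the key prefix property
    have hTake : ∀ (k n : ℕ) (u : List.Vector Bool (n + k)),
        ((p (n + k)) u).1.take n = ((p n) ⟨u.1.take n, take_mem_vector u⟩).1 := by
      intro k
      induction k with
      | zero =>
        intro n u
        have h1 : ((p (n+0)) u).1.take n = ((p (n+0)) u).1 :=
          List.take_of_length_le (le_of_eq ((p (n+0)) u).2)
        have h2 : (⟨u.1.take n, take_mem_vector u⟩ : List.Vector Bool n) = u := by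
          apply Subtype.ext
          exact List.take_of_length_le (le_of_eq u.2)
        rw [h1, h2]
        rfl
      | succ k ih =>
        intro n u
        have hmin : n ≤ n + k := Nat.le_add_right n k
        show ((p ((n + k) + 1)) u).1.take n = _
        calc ((p ((n + k) + 1)) u).1.take n
            = (((p ((n + k) + 1)) u).1.take (n + k)).take n := by
              rw [List.take_take, min_eq_left hmin]
          _ = ((p (n + k)) ⟨u.1.take (n + k), take_mem_vector u⟩).1.take n := by
              rw [compat (n + k) u]
          _ = ((p n) ⟨(u.1.take (n+k)).take n,
                take_mem_vector (⟨u.1.take (n + k), take_mem_vector u⟩ :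
                  List.Vector Bool (n + k))⟩).1 :=
              ih n ⟨u.1.take (n + k), take_mem_vector u⟩
          _ = ((p n) ⟨u.1.take n, take_mem_vector u⟩).1 := by
              have hvv : (⟨(u.1.take (n+k)).take n,
                  take_mem_vector (⟨u.1.take (n + k), take_mem_vector u⟩ :
                    List.Vector Bool (n + k))⟩ : List.Vector Bool n)
                  = ⟨u.1.take n, take_mem_vector u⟩ :=
                Subtype.ext (show (u.1.take (n+k)).take n = u.1.take n by
                  rw [List.take_take, min_eq_left hmin])
              exact congrArg (fun x : List.Vector Bool n => ((p n) x).1) hvv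
    have hAut : IsTreeAutFun ⇑e := by
      constructor
      · exact lenF
      · intro v w
        have hlen : (v ++ w).length = v.length + w.length := List.length_append
        have h1 : F (v ++ w) = ((p (v.length + w.length)) ⟨v ++ w, hlen⟩).1 :=
          hF _ _ hlen
        show (F (v ++ w)).take v.length = F v
        rw [h1, hTake w.length v.length ⟨v ++ w, hlen⟩]
        have h2 : (⟨(v ++ w).take v.length,
            take_mem_vector (⟨v ++ w, hlen⟩ :
              List.Vector Bool (v.length + w.length))⟩ : List.Vector Bool v.length)
            = ⟨v, rfl⟩ := by
          apply Subtype.ext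
          simpa using List.take_left (l₁ := v) (l₂ := w)
        rw [h2]
    refine ⟨⟨e, hAut⟩, ?_⟩
    funext n
    apply Equiv.ext
    intro v
    apply Subtype.ext
    show F v.1 = ((p n) v).1
    rw [hF n v.1 v.2]
    rfl

instance : CompactSpace TreeAut := by
  letI tP : ∀ n, TopologicalSpace (Equiv.Perm (List.Vector Bool n)) := fun _ => ⊥
  haveI hd : ∀ n, DiscreteTopology (Equiv.Perm (List.Vector Bool n)) := fun _ => ⟨rfl⟩
  have hind : Topology.IsInducing lpemb := by
    constructor
    show (⨅ n : ℕ, TopologicalSpace.induced (levelPerm n) ⊥) = _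
    rw [Pi.topologicalSpace, induced_iInf]
    exact iInf_congr fun n => (induced_compose (f := lpemb)
      (g := fun p => p n) (tγ := (⊥ : TopologicalSpace _))).symm
  have hinj : Function.Injective lpemb := by
    intro γ δ h
    apply treeAut_ext
    intro v
    have := congrFun h v.length
    have h2 := congrArg (fun e => (e ⟨v, rfl⟩ : List.Vector Bool v.length).1) this
    exact h2
  have hclosed : IsClosed (Set.range lpemb) := by
    rw [range_lpemb, lpcompat]
    refine isClosed_iInter fun n => ?_
    have : {p : ∀ n, Equiv.Perm (List.Vector Bool n) | ∀ v : List.Vector Bool (n + 1),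
        ((p (n+1)) v).1.take n = ((p n) ⟨v.1.take n, take_mem_vector v⟩).1}
        = ⋂ v : List.Vector Bool (n + 1), (fun p : ∀ n, Equiv.Perm (List.Vector Bool n)
          => (p n, p (n+1)))⁻¹' {q | ((q.2) v).1.take n = ((q.1) ⟨v.1.take n, take_mem_vector v⟩).1}
        := by
      ext p
      simp [Set.mem_iInter]
    rw [this]
    refine isClosed_iInter fun v => ?_
    exact (isClosed_discrete _).preimage ((continuous_apply n).prodMk (continuous_apply (n+1)))
  have hemb : Topology.IsClosedEmbedding lpemb := ⟨⟨hind, hinj⟩, hclosed⟩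
  exact hemb.compactSpace

end
-- chunk 5: adjacent product lies in the normal subgroup
section
open BinTree

variable {r : ℕ} {a : ZMod r → TreeAut}

lemma desc_mem {H : Subgroup TreeAut} {j : ZMod r}
    (hgen : ∀ l : ZMod r, l ≠ j → l ≠ j - 1 → a l ∈ H) (s : ZMod r) (m : ℕ)
    (hcond : ∀ i : ℕ, i < m → s - (i : ZMod r) ≠ j ∧ s - (i : ZMod r) ≠ j - 1) :
    desc a s m ∈ H := by
  induction m with
  | zero => exact one_mem H
  | succ m ih =>
    rw [desc_succ]
    exact mul_mem (ih fun i hi => hcond i (by omega))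
      (hgen _ (hcond m (by omega)).1 (hcond m (by omega)).2)

lemma zmod_cast_inj (hr0 : 0 < r) {x y : ℕ} (hx : x < r) (hy : y < r)
    (h : (x : ZMod r) = y) : x = y := by
  haveI : NeZero r := ⟨by omega⟩
  have := congrArg ZMod.val h
  rwa [ZMod.val_cast_of_lt hx, ZMod.val_cast_of_lt hy] at this

variable (hr : 3 ≤ r)
  (ha1 : a 1 = wr (a (r : ZMod r)) 1 true)
  (ha2 : a 2 = wr 1 (a 1) true)
  (hhi : ∀ i : ℕ, 3 ≤ i → i ≤ r → a (i : ZMod r) = wr (a ((i - 1 : ℕ) : ZMod r)) 1 false)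

include hr ha1 ha2 hhi in
lemma adj_mem (j : ZMod r) {H : Subgroup TreeAut}
    (hgen : ∀ l : ZMod r, l ≠ j → l ≠ j - 1 → a l ∈ H) :
    a j * a (j - 1) ∈ H := by
  haveI : NeZero r := ⟨by omega⟩
  set k : ℕ := if j = 0 then r else j.val with hk
  have hkj : (k : ZMod r) = j := by
    by_cases h0 : j = 0
    · simp [hk, h0, ZMod.natCast_self]
    · simpa [hk, h0] using (ZMod.natCast_rightInverse (n := r) j)
  have hkr : k ≤ r := by
    by_cases h0 : j = 0
    · simp [hk, h0]
    · simp only [hk, h0, if_false]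
      exact le_of_lt (ZMod.val_lt j)
  have hk1 : 1 ≤ k := by
    by_cases h0 : j = 0
    · simp only [hk, h0, if_true]; omega
    · simp only [hk, h0, if_false]
      by_contra h
      have hv : j.val = 0 := by omega
      exact h0 (by rw [← hkj]; simp [hk, h0, hv])
  have hrel : relWord a k = 1 := relWord_eq_one hr ha1 ha2 hhi k hk1 hkr
  rcases Nat.lt_or_ge k 2 with hklt | hk2
  · -- k = 1
    have hk1' : k = 1 := by omega
    rw [hk1'] at hrel hkj
    have hj1 : j = 1 := by rw [← hkj]; norm_cast
    have hj0 : ((r:ℕ) : ZMod r) = j - 1 := by rw [ZMod.natCast_self, hj1]; ring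
    have e0 : desc a ((1:ℕ) : ZMod r) 1 = a ((1:ℕ) : ZMod r) * 1 := desc_succ_left a _ 0
    have e1 : desc a ((r:ℕ) : ZMod r) (r - 1) =
        a ((r:ℕ) : ZMod r) * desc a (((r:ℕ) : ZMod r) - 1) (r - 2) := by
      have h := desc_succ_left a ((r:ℕ) : ZMod r) (r - 2)
      rwa [show r - 2 + 1 = r - 1 by omega] at h
    have hd : desc a (((r:ℕ) : ZMod r) - 1) (r - 2) ∈ H := by
      apply desc_mem hgen
      intro i hi
      have hcast : ((r:ℕ) : ZMod r) - 1 - (i : ZMod r) = -(((i+1 : ℕ)) : ZMod r) := by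
        push_cast [ZMod.natCast_self]
        ring
      constructor
      · rw [hcast, hj1]
        intro hcontra
        have hcc : ((i+1 : ℕ) : ZMod r) = ((r-1 : ℕ) : ZMod r) := by
          rw [Nat.cast_sub (by omega : 1 ≤ r), ZMod.natCast_self]
          push_cast at hcontra ⊢
          linear_combination -hcontra
        have := zmod_cast_inj (by omega) (by omega) (by omega) hcc
        omega
      · rw [hcast, hj1]
        intro hcontra
        have hcc : ((i+1 : ℕ) : ZMod r) = ((0 : ℕ) : ZMod r) := by
          push_cast at hcontra ⊢
          linear_combination -hcontra
        have := zmod_cast_inj (by omega) (by omega) (by omega) hcc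
        omega
    have hprod : a j * a (j - 1) * desc a (((r:ℕ) : ZMod r) - 1) (r - 2) = 1 := by
      rw [relWord, e0, e1] at hrel
      rw [← hj0, ← hkj]
      rw [← hrel]
      group
    have heq : a j * a (j - 1) = (desc a (((r:ℕ) : ZMod r) - 1) (r - 2))⁻¹ :=
      eq_inv_of_mul_eq_one_left hprod
    rw [heq]
    exact inv_mem hd
  · -- k ≥ 2
    have e1 : desc a ((k:ℕ) : ZMod r) k =
        a ((k:ℕ) : ZMod r) * desc a (((k:ℕ) : ZMod r) - 1) (k - 1) := by
      have h := desc_succ_left a ((k:ℕ) : ZMod r) (k - 1)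
      rwa [show k - 1 + 1 = k by omega] at h
    have e2 : desc a (((k:ℕ) : ZMod r) - 1) (k - 1) =
        a (((k:ℕ) : ZMod r) - 1) * desc a (((k:ℕ) : ZMod r) - 1 - 1) (k - 2) := by
      have h := desc_succ_left a (((k:ℕ) : ZMod r) - 1) (k - 2)
      rwa [show k - 2 + 1 = k - 1 by omega] at h
    rw [hkj] at e1 e2
    have hd1 : desc a (j - 1 - 1) (k - 2) ∈ H := by
      apply desc_mem hgen
      intro i hi
      have hcast : j - 1 - 1 - (i : ZMod r) = j - ((i + 2 : ℕ) : ZMod r) := by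
        push_cast; ring
      constructor
      · rw [hcast]
        intro hcontra
        have hcc : ((i+2 : ℕ) : ZMod r) = ((0 : ℕ) : ZMod r) := by
          push_cast at hcontra ⊢
          linear_combination -hcontra
        have := zmod_cast_inj (by omega) (by omega) (by omega) hcc
        omega
      · rw [hcast]
        intro hcontra
        have hcc : ((i+2 : ℕ) : ZMod r) = ((1 : ℕ) : ZMod r) := by
          push_cast at hcontra ⊢
          linear_combination -hcontra
        have := zmod_cast_inj (by omega) (by omega) (by omega) hcc
        omega
    have hd2 : desc a ((r:ℕ) : ZMod r) (r - k) ∈ H := by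
      apply desc_mem hgen
      intro i hi
      have hcast' : ((r:ℕ) : ZMod r) - (i : ZMod r) = -((i : ℕ) : ZMod r) := by
        rw [ZMod.natCast_self]; ring
      constructor
      · rw [hcast']
        intro hcontra
        have hcc : ((k + i : ℕ) : ZMod r) = ((0 : ℕ) : ZMod r) := by
          push_cast at hcontra ⊢
          linear_combination -hcontra + hkj
        have := zmod_cast_inj (by omega) (by omega) (by omega) hcc
        omega
      · rw [hcast']
        intro hcontra
        have hcc : ((k + i : ℕ) : ZMod r) = ((1 : ℕ) : ZMod r) := by
          push_cast at hcontra ⊢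
          linear_combination -hcontra + hkj
        have := zmod_cast_inj (by omega) (by omega) (by omega) hcc
        omega
    have hprod : a j * a (j - 1) *
        (desc a (j - 1 - 1) (k - 2) * desc a ((r:ℕ) : ZMod r) (r - k)) = 1 := by
      rw [relWord, hkj, e1, e2] at hrel
      rw [← hrel]
      group
    have heq : a j * a (j - 1) =
        (desc a (j - 1 - 1) (k - 2) * desc a ((r:ℕ) : ZMod r) (r - k))⁻¹ :=
      eq_inv_of_mul_eq_one_left hprod
    rw [heq]
    exact inv_mem (mul_mem hd1 hd2)

end

-- chunk 6: the main theorem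
open scoped Pointwise
/-- case s = 2: with `G = ⟨⟨a₁,…,a_r⟩⟩` and `N_j` the closed normal
subgroup generated by the `G`-conjugates of all `a_ℓ`, `ℓ ≢ j, j−1 (mod r)`, the
natural map `G → G/N_i × ⋯ × G/N_{i+r−2}` is surjective: for any targets
`t_j ∈ G` there is `g ∈ G` with `g ≡ t_j mod N_j` for `j = i, …, i + r − 2`. -/
theorem surjective_onto_quotients (r : ℕ) (hr : 3 ≤ r) (a : ZMod r → TreeAut)
    (ha1 : a 1 = wr (a (r : ZMod r)) 1 true)
    (ha2 : a 2 = wr 1 (a 1) true)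
    (hhi : ∀ i : ℕ, 3 ≤ i → i ≤ r → a (i : ZMod r) = wr (a ((i - 1 : ℕ) : ZMod r)) 1 false)
    (G : Set TreeAut)
    (hG : G = closure ((Subgroup.closure (Set.range a) : Subgroup TreeAut) : Set TreeAut))
    (N : ZMod r → Set TreeAut)
    (hN : ∀ j : ZMod r, N j = closure ((Subgroup.closure
      {x : TreeAut | ∃ g ∈ G, ∃ l : ZMod r, l ≠ j ∧ l ≠ j - 1 ∧ x = g * a l * g⁻¹}
      : Subgroup TreeAut) : Set TreeAut))
    (i : ZMod r) (t : ZMod r → TreeAut) (ht : ∀ j : ZMod r, t j ∈ G) :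
    ∃ g ∈ G, ∀ m : ℕ, m ≤ r - 2 →
      g⁻¹ * t (i + (m : ZMod r)) ∈ N (i + (m : ZMod r)) := by
  classical
  set Gsub : Subgroup TreeAut := Subgroup.closure (Set.range a) with hGsub
  set Gcl : Subgroup TreeAut := Gsub.topologicalClosure with hGcl
  have hGset : G = (Gcl : Set TreeAut) := by rw [hG]; rfl
  set Nsub : ZMod r → Subgroup TreeAut := fun j => Subgroup.closure
      {x : TreeAut | ∃ g ∈ G, ∃ l : ZMod r, l ≠ j ∧ l ≠ j - 1 ∧ x = g * a l * g⁻¹} with hNsub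
  set Ncl : ZMod r → Subgroup TreeAut := fun j => (Nsub j).topologicalClosure with hNcl
  have hNset : ∀ j, N j = (Ncl j : Set TreeAut) := fun j => by rw [hN j]; rfl
  have haGsub : ∀ l : ZMod r, a l ∈ Gsub := fun l => Subgroup.subset_closure ⟨l, rfl⟩
  have haG : ∀ l : ZMod r, a l ∈ Gcl := fun l => Gsub.le_topologicalClosure (haGsub l)
  have h1G : (1 : TreeAut) ∈ G := by rw [hGset]; exact Gcl.one_mem
  have hgen_mem : ∀ j l : ZMod r, l ≠ j → l ≠ j - 1 → a l ∈ Nsub j := by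
    intro j l h1 h2
    exact Subgroup.subset_closure ⟨1, h1G, l, h1, h2, by group⟩
  have hint : ∀ j, Ncl j ≤ Gcl := by
    intro j
    apply Subgroup.topologicalClosure_minimal
    · rw [hNsub]
      apply (Subgroup.closure_le _).2
      rintro x ⟨g, hg, l, -, -, rfl⟩
      rw [hGset] at hg
      exact Gcl.mul_mem (Gcl.mul_mem hg (haG l)) (Gcl.inv_mem hg)
    · exact isClosed_closure
  -- conjugation stability of the closed normal subgroups
  have hconj : ∀ j : ZMod r, ∀ g ∈ Gcl, ∀ x ∈ Ncl j, g * x * g⁻¹ ∈ Ncl j := by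
    intro j g hg
    have hgG : g ∈ G := by rw [hGset]; exact hg
    have hsub : ∀ x ∈ Nsub j, g * x * g⁻¹ ∈ Nsub j := by
      intro x hx
      refine Subgroup.closure_induction ?_ ?_ ?_ ?_ hx
      · rintro y ⟨h, hh, l, h1, h2, rfl⟩
        have hghG : g * h ∈ G := by
          rw [hGset] at hh ⊢
          exact Gcl.mul_mem hg hh
        refine Subgroup.subset_closure ⟨g * h, hghG, l, h1, h2, by group⟩
      · simpa using (Nsub j).one_mem
      · intro x y _ _ hx' hy'
        have he : g * (x * y) * g⁻¹ = (g * x * g⁻¹) * (g * y * g⁻¹) := by group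
        rw [he]
        exact mul_mem hx' hy'
      · intro x _ hx'
        have he : g * x⁻¹ * g⁻¹ = (g * x * g⁻¹)⁻¹ := by group
        rw [he]
        exact inv_mem hx'
    intro x hx
    have hcont : Continuous fun y : TreeAut => g * y * g⁻¹ :=
      (continuous_const.mul continuous_id).mul continuous_const
    have h1 : (fun y : TreeAut => g * y * g⁻¹) x ∈
        closure ((fun y : TreeAut => g * y * g⁻¹) '' (Nsub j : Set TreeAut)) :=
      image_closure_subset_closure_image hcont (Set.mem_image_of_mem _ hx)
    have h2 : closure ((fun y : TreeAut => g * y * g⁻¹) '' (Nsub j : Set TreeAut)) ⊆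
        closure (Nsub j : Set TreeAut) := by
      apply closure_mono
      rintro _ ⟨y, hy, rfl⟩
      exact hsub y hy
    exact h2 h1
  have hzG' : ∀ (j : ZMod r) (z : TreeAut),
      z ∈ closure ((Subgroup.zpowers (a j) : Subgroup TreeAut) : Set TreeAut) → z ∈ Gcl := by
    intro j z hz
    have hsub : ((Subgroup.zpowers (a j) : Subgroup TreeAut) : Set TreeAut) ⊆ (Gcl : Set TreeAut) :=
      fun x hx => (Subgroup.zpowers_le.mpr (haG j)) hx
    exact closure_minimal hsub isClosed_closure hz
  have hzN : ∀ (j j' : ZMod r), j ≠ j' → j ≠ j' - 1 → ∀ z : TreeAut,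
      z ∈ closure ((Subgroup.zpowers (a j) : Subgroup TreeAut) : Set TreeAut) → z ∈ Ncl j' := by
    intro j j' h1 h2 z hz
    have haj : a j ∈ Ncl j' := (Nsub j').le_topologicalClosure (hgen_mem j' j h1 h2)
    have hsub : ((Subgroup.zpowers (a j) : Subgroup TreeAut) : Set TreeAut) ⊆
        (Ncl j' : Set TreeAut) := fun x hx => (Subgroup.zpowers_le.mpr haj) hx
    exact closure_minimal hsub isClosed_closure hz
  -- decomposition lemma
  have hdecomp : ∀ j : ZMod r, ∀ y ∈ Gcl, ∃ z : TreeAut,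
      z ∈ closure ((Subgroup.zpowers (a j) : Subgroup TreeAut) : Set TreeAut) ∧
      z⁻¹ * y ∈ Ncl j := by
    intro j y hy
    have hZcompact : IsCompact (closure ((Subgroup.zpowers (a j) : Subgroup TreeAut) :
        Set TreeAut)) := IsClosed.isCompact isClosed_closure
    have hNclosed : IsClosed (Ncl j : Set TreeAut) := isClosed_closure
    have hSclosed : IsClosed (closure ((Subgroup.zpowers (a j) : Subgroup TreeAut) :
        Set TreeAut) * (Ncl j : Set TreeAut)) :=
      IsClosed.mul_left_of_isCompact hNclosed hZcompact
    have hadj : a j * a (j - 1) ∈ Nsub j :=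
      adj_mem hr ha1 ha2 hhi j (hgen_mem j)
    have hsub : (Gsub : Set TreeAut) ⊆ closure ((Subgroup.zpowers (a j) : Subgroup TreeAut) :
        Set TreeAut) * (Ncl j : Set TreeAut) := by
      intro x hx
      have key : ∃ z ∈ Subgroup.zpowers (a j), ∃ n ∈ Ncl j, x = z * n := by
        refine Subgroup.closure_induction ?_ ?_ ?_ ?_ hx
        · rintro _ ⟨l, rfl⟩
          by_cases hl1 : l = j
          · subst hl1
            exact ⟨a l, Subgroup.mem_zpowers _, 1, (Ncl l).one_mem, by simp⟩
          by_cases hl2 : l = j - 1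
          · subst hl2
            refine ⟨(a j)⁻¹, inv_mem (Subgroup.mem_zpowers _),
              a j * a (j - 1), (Nsub j).le_topologicalClosure hadj, by group⟩
          · exact ⟨1, (Subgroup.zpowers (a j)).one_mem,
              a l, (Nsub j).le_topologicalClosure (hgen_mem j l hl1 hl2), by simp⟩
        · exact ⟨1, one_mem _, 1, one_mem _, by simp⟩
        · rintro x y _ _ ⟨z1, hz1, n1, hn1, rfl⟩ ⟨z2, hz2, n2, hn2, rfl⟩
          have hz2G : z2 ∈ Gcl := Subgroup.zpowers_le.mpr (haG j) hz2
          refine ⟨z1 * z2, mul_mem hz1 hz2, (z2⁻¹ * n1 * z2) * n2, ?_, by group⟩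
          have : z2⁻¹ * n1 * z2 = z2⁻¹ * n1 * (z2⁻¹)⁻¹ := by group
          exact mul_mem (this ▸ hconj j z2⁻¹ (inv_mem hz2G) n1 hn1) hn2
        · rintro x _ ⟨z, hz, n, hn, rfl⟩
          have hzG2 : z ∈ Gcl := Subgroup.zpowers_le.mpr (haG j) hz
          exact ⟨z⁻¹, inv_mem hz, z * n⁻¹ * z⁻¹, hconj j z hzG2 n⁻¹ (inv_mem hn), by group⟩
      obtain ⟨z, hz, n, hn, rfl⟩ := key
      exact Set.mem_mul.2 ⟨z, subset_closure hz, n, hn, rfl⟩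
    have hGZ : (Gcl : Set TreeAut) ⊆ closure ((Subgroup.zpowers (a j) : Subgroup TreeAut) :
        Set TreeAut) * (Ncl j : Set TreeAut) := closure_minimal hsub hSclosed
    obtain ⟨z, hz, n, hn, hzn⟩ := Set.mem_mul.1 (hGZ hy)
    refine ⟨z, hz, ?_⟩
    have : z⁻¹ * y = n := by rw [← hzn]; group
    rw [this]
    exact hn
  -- natural number cast injectivity below r
  have hcastinj : ∀ x y : ℕ, x < r → y < r → (x : ZMod r) = (y : ZMod r) → x = y :=
    fun x y hx hy h => zmod_cast_inj (by omega) hx hy h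
  have ht' : ∀ j : ZMod r, t j ∈ Gcl := fun j => by
    have := ht j
    rwa [hGset] at this
  -- main recursion
  have main : ∀ m : ℕ, m ≤ r - 2 → ∃ g ∈ Gcl, ∀ m' : ℕ, m' ≤ m →
      g⁻¹ * t (i + (m' : ZMod r)) ∈ Ncl (i + (m' : ZMod r)) := by
    intro m
    induction m with
    | zero =>
      intro _
      obtain ⟨z, hz, hzn⟩ := hdecomp (i + ((0:ℕ) : ZMod r)) (t (i + ((0:ℕ) : ZMod r)))
        (ht' _)
      refine ⟨z, hzG' _ z hz, ?_⟩
      intro m' hm'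
      have : m' = 0 := Nat.le_zero.1 hm'
      subst this
      exact hzn
    | succ m ih =>
      intro hmr
      obtain ⟨g, hgG, hgm⟩ := ih (by omega)
      obtain ⟨z, hz, hzn⟩ := hdecomp (i + ((m+1 : ℕ) : ZMod r))
        (g⁻¹ * t (i + ((m+1 : ℕ) : ZMod r)))
        (Gcl.mul_mem (Gcl.inv_mem hgG) (ht' _))
      refine ⟨g * z, Gcl.mul_mem hgG (hzG' _ z hz), ?_⟩
      intro m' hm'
      rcases Nat.lt_or_ge m' (m+1) with hlt | hge
      · have hmem := hgm m' (by omega)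
        have hne1 : i + ((m+1 : ℕ) : ZMod r) ≠ i + ((m' : ℕ) : ZMod r) := by
          intro hcontra
          have h1 : ((m+1 : ℕ) : ZMod r) = ((m' : ℕ) : ZMod r) := by
            have := add_left_cancel hcontra
            exact this
          have := hcastinj (m+1) m' (by omega) (by omega) h1
          omega
        have hne2 : i + ((m+1 : ℕ) : ZMod r) ≠ i + ((m' : ℕ) : ZMod r) - 1 := by
          intro hcontra
          have h1 : ((m+2 : ℕ) : ZMod r) = ((m' : ℕ) : ZMod r) := by
            push_cast at hcontra ⊢
            linear_combination hcontra
          have := hcastinj (m+2) m' (by omega) (by omega) h1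
          omega
        have hzmem : z ∈ Ncl (i + ((m' : ℕ) : ZMod r)) :=
          hzN _ _ hne1 hne2 z hz
        have he : (g * z)⁻¹ * t (i + ((m' : ℕ) : ZMod r)) =
            z⁻¹ * (g⁻¹ * t (i + ((m' : ℕ) : ZMod r))) := by group
        rw [he]
        exact mul_mem (inv_mem hzmem) hmem
      · have hm1 : m' = m + 1 := by omega
        subst hm1
        have he : (g * z)⁻¹ * t (i + ((m+1 : ℕ) : ZMod r)) =
            z⁻¹ * (g⁻¹ * t (i + ((m+1 : ℕ) : ZMod r))) := by group
        rw [he]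
        exact hzn
  obtain ⟨g, hgG, hgm⟩ := main (r - 2) le_rfl
  refine ⟨g, by rw [hGset]; exact hgG, ?_⟩
  intro m hm
  rw [hNset]
  exact hgm m hm

end BinTree
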